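/- Let (X,d,μ) be an upper doubling metric measure space with dominating function λ satisfying λ(x,r) ≤ C̃ λ(y,r) whenever d(x,y) ≤ r. Then there exists a constant C > 0 such that for all balls B ⊂ R ⊂ Q, K_{R,Q} ≤ C · K_{B,Q}, where K_{B,Q} = 1 + Σ_{k=1}^{N_{B,Q}} μ(6^k B)/λ(x_B, 6^k r_B). -/
import Mathlib


open MeasureTheory Metric
open scoped ENNReal NNReal

/-- `N_{B,Q}`: the smallest integer `n` with `6^n r_B ≥ r_Q`. -/
noncomputable def NBQ (rB rQ : ℝ) : ℕ := sInf {n : ℕ | rQ ≤ 6 ^ n * rB}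

/-- The coefficient `K_{B,Q} = 1 + ∑_{k=1}^{N_{B,Q}} μ(6^k B)/λ(x_B, 6^k r_B)`. -/
noncomputable def Kcoef {X : Type*} [MetricSpace X] [MeasurableSpace X]
    (μ : Measure X) (lam : X → ℝ → ℝ) (xB : X) (rB rQ : ℝ) : ℝ≥0∞ :=
  1 + ∑ k ∈ Finset.Icc 1 (NBQ rB rQ),
      μ (ball xB ((6 : ℝ) ^ k * rB)) / ENNReal.ofReal (lam xB ((6 : ℝ) ^ k * rB))

lemma NBQ_set_nonempty {rB rQ : ℝ} (hrB : 0 < rB) :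
    {n : ℕ | rQ ≤ 6 ^ n * rB}.Nonempty := by
  obtain ⟨n, hn⟩ := pow_unbounded_of_one_lt (rQ / rB) (by norm_num : (1:ℝ) < 6)
  refine ⟨n, ?_⟩
  rw [Set.mem_setOf_eq]
  rw [div_lt_iff₀ hrB] at hn
  linarith

lemma NBQ_spec {rB rQ : ℝ} (hrB : 0 < rB) : rQ ≤ 6 ^ NBQ rB rQ * rB :=
  Nat.sInf_mem (NBQ_set_nonempty hrB)

lemma NBQ_lt {rB rQ : ℝ} {m : ℕ} (h : m < NBQ rB rQ) : 6 ^ m * rB < rQ := by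
  have := Nat.notMem_of_lt_sInf h
  simpa [Set.mem_setOf_eq, not_le] using this

/-- For balls `B ⊂ R ⊂ Q`, `K_{R,Q} ≤ C K_{B,Q}`. -/
theorem Kcoef_mono_of_subset
    {X : Type*} [MetricSpace X] [MeasurableSpace X] (μ : Measure X)
    (lam : X → ℝ → ℝ) (Clam Ct : ℝ) (hClam : 1 ≤ Clam)
    (hpos : ∀ (x : X) (r : ℝ), 0 < r → 0 < lam x r)
    (hmono : ∀ (x : X) (r s : ℝ), 0 < r → r ≤ s → lam x r ≤ lam x s)
    (hdom : ∀ (x : X) (r : ℝ), 0 < r → μ (ball x r) ≤ ENNReal.ofReal (lam x r))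
    (hdoub : ∀ (x : X) (r : ℝ), 0 < r → lam x r ≤ Clam * lam x (r / 2))
    (hcomp : ∀ (x y : X) (r : ℝ), dist x y ≤ r → lam x r ≤ Ct * lam y r) :
    ∃ C : ℝ≥0∞, 0 < C ∧ C < ⊤ ∧
      ∀ (xB xR xQ : X) (rB rR rQ : ℝ), 0 < rB → rB ≤ rR → rR ≤ rQ →
        ball xB rB ⊆ ball xR rR → ball xR rR ⊆ ball xQ rQ →
        Kcoef μ lam xR rR rQ ≤ C * Kcoef μ lam xB rB rQ := by
  classical
  set Ct' : ℝ := max Ct 1 with hCt'def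
  have hCt1 : (1:ℝ) ≤ Ct' := le_max_right _ _
  have hClam0 : (0:ℝ) ≤ Clam := by linarith
  have hC4 : (0:ℝ) ≤ Clam ^ 4 := by positivity
  have hC41 : (1:ℝ) ≤ Clam ^ 4 := one_le_pow₀ hClam
  set A : ℝ := Clam ^ 4 * Ct' with hAdef
  have hA1 : (1:ℝ) ≤ A := by nlinarith
  have hA0 : (0:ℝ) ≤ A := by linarith
  refine ⟨ENNReal.ofReal A + 3, ?_, ?_, ?_⟩
  · exact lt_of_lt_of_le (by norm_num : (0:ℝ≥0∞) < 3) le_add_self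
  · exact ENNReal.add_lt_top.mpr ⟨ENNReal.ofReal_lt_top, by norm_num⟩
  intro xB xR xQ rB rR rQ hrB hBR hRQ hsubBR hsubRQ
  have hrR : 0 < rR := lt_of_lt_of_le hrB hBR
  have hdist : dist xB xR < rR := by
    have := hsubBR (mem_ball_self hrB)
    simpa [mem_ball] using this
  set NR := NBQ rR rQ with hNRdef
  set NB := NBQ rB rQ with hNBdef
  set j : ℕ → ℕ := fun k => NBQ rB (2 * (6 ^ k * rR)) with hjdef
  have hjspec : ∀ k, 2 * (6 ^ k * rR) ≤ 6 ^ (j k) * rB := fun k => NBQ_spec hrB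
  have hjlt : ∀ k m, m < j k → 6 ^ m * rB < 2 * (6 ^ k * rR) :=
    fun k m h => NBQ_lt h
  have hj1 : ∀ k, 1 ≤ k → 2 ≤ j k := by
    intro k hk
    by_contra h
    push_neg at h
    have h1 : (6:ℝ) ^ (j k) * rB ≤ 6 ^ 1 * rB := by
      apply mul_le_mul_of_nonneg_right _ hrB.le
      exact pow_le_pow_right₀ (by norm_num) (by omega)
    have h2 := hjspec k
    have h3 : (6:ℝ) ^ 1 * rR ≤ 6 ^ k * rR :=
      mul_le_mul_of_nonneg_right (pow_le_pow_right₀ (by norm_num) hk) hrR.le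
    norm_num at h1 h3
    nlinarith
  have hjub : ∀ k, 6 ^ (j k) * rB < 12 * (6 ^ k * rR) := by
    intro k
    have hp : (0:ℝ) < 6 ^ k := by positivity
    rcases Nat.eq_zero_or_pos (j k) with h0 | h0
    · rw [h0]
      have h1 : (1:ℝ) ≤ 6 ^ k := one_le_pow₀ (by norm_num : (1:ℝ) ≤ 6)
      simp only [pow_zero, one_mul]
      nlinarith
    · have hm := hjlt k (j k - 1) (by omega)
      have hpow : (6:ℝ) ^ (j k) = 6 ^ (j k - 1) * 6 := by
        rw [← pow_succ]
        congr 1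
        omega
      nlinarith
  have hjmono : StrictMono j := by
    apply strictMono_nat_of_lt_succ
    intro k
    by_contra h
    push_neg at h
    have h1 := hjspec (k+1)
    have h2 : (6:ℝ) ^ (j (k+1)) * rB ≤ 6 ^ (j k) * rB :=
      mul_le_mul_of_nonneg_right (pow_le_pow_right₀ (by norm_num) h) hrB.le
    have h3 := hjub k
    have hpow : (6:ℝ) ^ (k+1) = 6 ^ k * 6 := pow_succ 6 k
    nlinarith
  have hf1 : ∀ k : ℕ,
      μ (ball xR ((6:ℝ) ^ k * rR)) / ENNReal.ofReal (lam xR ((6:ℝ) ^ k * rR)) ≤ 1 := by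
    intro k
    have hs : (0:ℝ) < 6 ^ k * rR := by positivity
    exact le_trans (ENNReal.div_le_div_right (hdom _ _ hs) _) ENNReal.div_self_le_one
  have hkey : ∀ k : ℕ, 1 ≤ k →
      μ (ball xR ((6:ℝ) ^ k * rR)) / ENNReal.ofReal (lam xR ((6:ℝ) ^ k * rR)) ≤
        ENNReal.ofReal A *
          (μ (ball xB ((6:ℝ) ^ (j k) * rB)) /
            ENNReal.ofReal (lam xB ((6:ℝ) ^ (j k) * rB))) := by
    intro k hk
    set s : ℝ := (6:ℝ) ^ k * rR with hsdef
    set t : ℝ := (6:ℝ) ^ (j k) * rB with htdef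
    have hs : 0 < s := by positivity
    have ht : 0 < t := by positivity
    have hrRs : rR ≤ s := by
      have h1 : (1:ℝ) ≤ 6 ^ k := one_le_pow₀ (by norm_num : (1:ℝ) ≤ 6)
      nlinarith
    have hst : 2 * s ≤ t := hjspec k
    have hts : t < 12 * s := hjub k
    have hsub : ball xR s ⊆ ball xB t := by
      intro y hy
      rw [mem_ball] at hy ⊢
      have htri := dist_triangle y xR xB
      have hd : dist xR xB < rR := by rw [dist_comm]; exact hdist
      linarith
    have hμ : μ (ball xR s) ≤ μ (ball xB t) := measure_mono hsub
    -- λ chain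
    have c1 : lam xB t ≤ Clam * lam xB (t/2) := hdoub _ _ ht
    have c2 : lam xB (t/2) ≤ Clam * lam xB (t/4) := by
      have := hdoub xB (t/2) (by positivity)
      rwa [show t/2/2 = t/4 from by ring] at this
    have c3 : lam xB (t/4) ≤ Clam * lam xB (t/8) := by
      have := hdoub xB (t/4) (by positivity)
      rwa [show t/4/2 = t/8 from by ring] at this
    have c4 : lam xB (t/8) ≤ Clam * lam xB (t/16) := by
      have := hdoub xB (t/8) (by positivity)
      rwa [show t/8/2 = t/16 from by ring] at this
    have c5 : lam xB (t/16) ≤ lam xB s := hmono _ _ _ (by positivity) (by linarith)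
    have c6 : lam xB s ≤ Ct * lam xR s := hcomp xB xR s (le_trans hdist.le hrRs)
    have hlRpos : 0 < lam xR s := hpos _ _ hs
    have c7 : Ct * lam xR s ≤ Ct' * lam xR s :=
      mul_le_mul_of_nonneg_right (le_max_left _ _) hlRpos.le
    have hlam : lam xB t ≤ A * lam xR s := by
      have d1 : lam xB t ≤ Clam ^ 4 * lam xB (t/16) := by
        calc lam xB t ≤ Clam * lam xB (t/2) := c1
          _ ≤ Clam * (Clam * lam xB (t/4)) := mul_le_mul_of_nonneg_left c2 hClam0
          _ ≤ Clam * (Clam * (Clam * lam xB (t/8))) :=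
              mul_le_mul_of_nonneg_left (mul_le_mul_of_nonneg_left c3 hClam0) hClam0
          _ ≤ Clam * (Clam * (Clam * (Clam * lam xB (t/16)))) :=
              mul_le_mul_of_nonneg_left
                (mul_le_mul_of_nonneg_left (mul_le_mul_of_nonneg_left c4 hClam0) hClam0) hClam0
          _ = Clam ^ 4 * lam xB (t/16) := by ring
      calc lam xB t ≤ Clam ^ 4 * lam xB (t/16) := d1
        _ ≤ Clam ^ 4 * lam xB s := mul_le_mul_of_nonneg_left c5 hC4
        _ ≤ Clam ^ 4 * (Ct' * lam xR s) :=
            mul_le_mul_of_nonneg_left (le_trans c6 c7) hC4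
        _ = A * lam xR s := by rw [hAdef]; ring
    have hlBpos : 0 < lam xB t := hpos _ _ ht
    have hdB0 : ENNReal.ofReal (lam xB t) ≠ 0 := by
      simp [ENNReal.ofReal_eq_zero, not_le, hlBpos]
    have hdBT : ENNReal.ofReal (lam xB t) ≠ ⊤ := ENNReal.ofReal_ne_top
    have hdR0 : ENNReal.ofReal (lam xR s) ≠ 0 := by
      simp [ENNReal.ofReal_eq_zero, not_le, hlRpos]
    have hdRT : ENNReal.ofReal (lam xR s) ≠ ⊤ := ENNReal.ofReal_ne_top
    rw [ENNReal.div_le_iff hdR0 hdRT]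
    have hdB_le : ENNReal.ofReal (lam xB t) ≤ ENNReal.ofReal A * ENNReal.ofReal (lam xR s) := by
      rw [← ENNReal.ofReal_mul hA0]
      exact ENNReal.ofReal_le_ofReal hlam
    calc μ (ball xR s) ≤ μ (ball xB t) := hμ
      _ = μ (ball xB t) / ENNReal.ofReal (lam xB t) * ENNReal.ofReal (lam xB t) :=
          (ENNReal.div_mul_cancel hdB0 hdBT).symm
      _ ≤ μ (ball xB t) / ENNReal.ofReal (lam xB t) *
            (ENNReal.ofReal A * ENNReal.ofReal (lam xR s)) := mul_le_mul_right hdB_le _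
      _ = ENNReal.ofReal A * (μ (ball xB t) / ENNReal.ofReal (lam xB t)) *
            ENNReal.ofReal (lam xR s) := by ring
  -- sum bookkeeping
  simp only [Kcoef]
  set SB : ℝ≥0∞ := ∑ n ∈ Finset.Icc 1 NB,
      μ (ball xB ((6:ℝ) ^ n * rB)) / ENNReal.ofReal (lam xB ((6:ℝ) ^ n * rB)) with hSBdef
  set S1 : Finset ℕ := (Finset.Icc 1 NR).filter (fun k => j k ≤ NB) with hS1def
  set S2 : Finset ℕ := (Finset.Icc 1 NR).filter (fun k => ¬ j k ≤ NB) with hS2def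
  have hsplit : ∑ k ∈ Finset.Icc 1 NR,
      μ (ball xR ((6:ℝ) ^ k * rR)) / ENNReal.ofReal (lam xR ((6:ℝ) ^ k * rR)) =
      (∑ k ∈ S1, μ (ball xR ((6:ℝ) ^ k * rR)) / ENNReal.ofReal (lam xR ((6:ℝ) ^ k * rR))) +
      (∑ k ∈ S2, μ (ball xR ((6:ℝ) ^ k * rR)) / ENNReal.ofReal (lam xR ((6:ℝ) ^ k * rR))) :=
    (Finset.sum_filter_add_sum_filter_not _ _ _).symm
  have hS2sub : S2 ⊆ {NR - 1, NR} := by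
    intro k hk
    simp only [hS2def, Finset.mem_filter, Finset.mem_Icc, not_le] at hk
    obtain ⟨⟨hk1, hk2⟩, hkj⟩ := hk
    have h1 : 6 ^ NB * rB < 2 * (6 ^ k * rR) := hjlt k NB hkj
    have h2 : rQ ≤ 6 ^ NB * rB := NBQ_spec hrB
    have h3 : rQ ≤ 6 ^ (k+1) * rR := by
      have hpow : (6:ℝ) ^ (k+1) = 6 ^ k * 6 := pow_succ 6 k
      have hp : (0:ℝ) < 6 ^ k := by positivity
      nlinarith
    have h4 : NR ≤ k + 1 := Nat.sInf_le h3
    simp only [Finset.mem_insert, Finset.mem_singleton]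
    omega
  have hS2card : S2.card ≤ 2 :=
    le_trans (Finset.card_le_card hS2sub) (le_trans (Finset.card_insert_le _ _) (by simp))
  have hS2bound : (∑ k ∈ S2,
      μ (ball xR ((6:ℝ) ^ k * rR)) / ENNReal.ofReal (lam xR ((6:ℝ) ^ k * rR))) ≤ 2 := by
    calc (∑ k ∈ S2,
        μ (ball xR ((6:ℝ) ^ k * rR)) / ENNReal.ofReal (lam xR ((6:ℝ) ^ k * rR)))
        ≤ ∑ _k ∈ S2, (1:ℝ≥0∞) := Finset.sum_le_sum (fun k _ => hf1 k)
      _ = (S2.card : ℝ≥0∞) := by simp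
      _ ≤ 2 := by exact_mod_cast hS2card
  have himg : S1.image j ⊆ Finset.Icc 1 NB := by
    intro n hn
    obtain ⟨k, hk, rfl⟩ := Finset.mem_image.mp hn
    simp only [hS1def, Finset.mem_filter, Finset.mem_Icc] at hk
    obtain ⟨⟨hk1, hk2⟩, hkj⟩ := hk
    exact Finset.mem_Icc.mpr ⟨by have := hj1 k hk1; omega, hkj⟩
  have hS1bound : (∑ k ∈ S1,
      μ (ball xR ((6:ℝ) ^ k * rR)) / ENNReal.ofReal (lam xR ((6:ℝ) ^ k * rR))) ≤
      ENNReal.ofReal A * SB := by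
    calc (∑ k ∈ S1,
        μ (ball xR ((6:ℝ) ^ k * rR)) / ENNReal.ofReal (lam xR ((6:ℝ) ^ k * rR)))
        ≤ ∑ k ∈ S1, ENNReal.ofReal A *
            (μ (ball xB ((6:ℝ) ^ (j k) * rB)) /
              ENNReal.ofReal (lam xB ((6:ℝ) ^ (j k) * rB))) := by
          refine Finset.sum_le_sum (fun k hk => ?_)
          simp only [hS1def, Finset.mem_filter, Finset.mem_Icc] at hk
          exact hkey k hk.1.1
      _ = ENNReal.ofReal A * ∑ k ∈ S1,
            (μ (ball xB ((6:ℝ) ^ (j k) * rB)) /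
              ENNReal.ofReal (lam xB ((6:ℝ) ^ (j k) * rB))) := by
          rw [Finset.mul_sum]
      _ = ENNReal.ofReal A * ∑ n ∈ S1.image j,
            (μ (ball xB ((6:ℝ) ^ n * rB)) /
              ENNReal.ofReal (lam xB ((6:ℝ) ^ n * rB))) := by
          rw [Finset.sum_image (fun a _ b _ h => hjmono.injective h)]
      _ ≤ ENNReal.ofReal A * SB := by
          refine mul_le_mul_right (Finset.sum_le_sum_of_subset himg) _
  calc (1:ℝ≥0∞) + ∑ k ∈ Finset.Icc 1 NR,
        μ (ball xR ((6:ℝ) ^ k * rR)) / ENNReal.ofReal (lam xR ((6:ℝ) ^ k * rR))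
      ≤ 1 + (ENNReal.ofReal A * SB + 2) := by
        rw [hsplit]
        exact add_le_add le_rfl (add_le_add hS1bound hS2bound)
    _ = 3 + ENNReal.ofReal A * SB := by ring
    _ ≤ 3 * (1 + SB) + ENNReal.ofReal A * (1 + SB) := by
        refine add_le_add ?_ (mul_le_mul_right le_add_self _)
        simpa using mul_le_mul_right (le_self_add : (1:ℝ≥0∞) ≤ 1 + SB) 3
    _ = (ENNReal.ofReal A + 3) * (1 + SB) := by ring
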